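/- Let N be a left cancellative monoid of finite right geometric type, finitely generated, M ⊆ N a left unitary submonoid, and P ⊆ N a finite set of right units with MP = N. Then M is finitely generated and M is quasi-isometric to N. -/

import Mathlib

open scoped ENNReal NNReal

def IsSemimetric {X : Type*} (d : X → X → ℝ≥0∞) : Prop :=
  (∀ x y, d x y = 0 ↔ x = y) ∧ ∀ x y z, d x z ≤ d x y + d y z

noncomputable def wordDist {M : Type*} [Monoid M] (S : Set M) (x y : M) : ℝ≥0∞ :=
  sInf {n : ℝ≥0∞ | ∃ w : List M, (∀ s ∈ w, s ∈ S) ∧ x * w.prod = y ∧ n = w.length}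

noncomputable def setDist {X : Type*} (d : X → X → ℝ≥0∞) (A B : Set X) : ℝ≥0∞ :=
  ⨅ a ∈ A, ⨅ b ∈ B, d a b

lemma wordDist_le {M : Type*} [Monoid M] (S : Set M) {x y : M} (w : List M)
    (hw : ∀ s ∈ w, s ∈ S) (hxy : x * w.prod = y) :
    wordDist S x y ≤ w.length :=
  sInf_le ⟨w, hw, hxy, rfl⟩

lemma wordDist_attained {M : Type*} [Monoid M] (S : Set M) {x y : M}
    (h : wordDist S x y ≠ ⊤) :
    ∃ w : List M, (∀ s ∈ w, s ∈ S) ∧ x * w.prod = y ∧ wordDist S x y = w.length := by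
  set A : Set ℕ := {k | ∃ w : List M, (∀ s ∈ w, s ∈ S) ∧ x * w.prod = y ∧ k = w.length} with hA
  have hAne : A.Nonempty := by
    by_contra hne
    apply h
    rw [wordDist, sInf_eq_top]
    rintro n ⟨w, hw1, hw2, hw3⟩
    exact absurd (⟨w.length, w, hw1, hw2, rfl⟩ : A.Nonempty) hne
  obtain ⟨w, hw1, hw2, hw3⟩ := Nat.sInf_mem hAne
  refine ⟨w, hw1, hw2, le_antisymm (wordDist_le S w hw1 hw2) ?_⟩
  rw [wordDist]
  apply le_sInf
  rintro n ⟨w', hw1', hw2', rfl⟩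
  have h1 : sInf A ≤ w'.length := Nat.sInf_le ⟨w', hw1', hw2', rfl⟩
  have h2 : w.length = sInf A := hw3.symm
  exact_mod_cast (h2 ▸ h1 : w.length ≤ w'.length)

theorem stmt_15 {N : Type*} [Monoid N]
    (hlc : ∀ m x y : N, m * x = m * y → x = y)
    (hfgt : ∀ b c : N, {a : N | a * b = c}.Finite)
    (T : Set N) (hT : T.Finite) (hTgen : Submonoid.closure T = ⊤)
    (M : Submonoid N)
    (hunit : ∀ s t : N, s ∈ M → s * t ∈ M → t ∈ M)
    (P : Set N) (hP : P.Finite) (hPu : ∀ p ∈ P, ∃ q : N, p * q = 1)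
    (hMP : ∀ n : N, ∃ m ∈ M, ∃ p ∈ P, m * p = n) :
    ∃ S : Set M, S.Finite ∧ Submonoid.closure S = ⊤ ∧
      ∃ (f : M → N) (lam eps mu : ℝ≥0), 1 ≤ lam ∧ 0 < eps ∧ 1 ≤ mu ∧
        (∀ x y : M, wordDist S x y / (lam : ℝ≥0∞) - (eps : ℝ≥0∞) ≤ wordDist T (f x) (f y) ∧
          wordDist T (f x) (f y) ≤ (lam : ℝ≥0∞) * wordDist S x y + (eps : ℝ≥0∞)) ∧
        ∀ n : N, ∃ x : M, wordDist T (f x) n ≤ (mu : ℝ≥0∞) ∧ wordDist T n (f x) ≤ (mu : ℝ≥0∞) := by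
  classical
  -- every element is a product over T
  have hlist : ∀ n : N, ∃ l : List N, (∀ t ∈ l, t ∈ T) ∧ l.prod = n := by
    intro n
    exact Submonoid.exists_list_of_mem_closure (hTgen ▸ Submonoid.mem_top n)
  -- right inverses for elements of P
  set qf : N → N := fun p => if h : p ∈ P then (hPu p h).choose else 1 with hqfdef
  have hqf : ∀ p ∈ P, p * qf p = 1 := by
    intro p hp
    simp only [hqfdef, dif_pos hp]
    exact (hPu p hp).choose_spec
  -- minimal word length
  set len : N → ℕ := fun n =>
    sInf {k : ℕ | ∃ l : List N, (∀ t ∈ l, t ∈ T) ∧ l.length = k ∧ l.prod = n} with hlendef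
  have hlen_spec : ∀ n : N, ∃ l : List N, (∀ t ∈ l, t ∈ T) ∧ l.length = len n ∧ l.prod = n := by
    intro n
    obtain ⟨l, hl1, hl2⟩ := hlist n
    exact Nat.sInf_mem (⟨l.length, l, hl1, rfl, hl2⟩ :
      {k : ℕ | ∃ l : List N, (∀ t ∈ l, t ∈ T) ∧ l.length = k ∧ l.prod = n}.Nonempty)
  choose wl hwl1 hwl2 hwl3 using hlen_spec
  have hlen_one : len 1 = 0 :=
    Nat.le_zero.mp (Nat.sInf_le ⟨[], by simp, by simp, by simp⟩)
  set maxP : ℕ := hP.toFinset.sup len with hmaxP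
  set maxQ : ℕ := hP.toFinset.sup (fun p => len (qf p)) with hmaxQ
  have hlePmax : ∀ p ∈ P, len p ≤ maxP := fun p hp =>
    Finset.le_sup (hP.mem_toFinset.mpr hp)
  have hleQmax : ∀ p ∈ P, len (qf p) ≤ maxQ := fun p hp =>
    Finset.le_sup (f := fun p => len (qf p)) (hP.mem_toFinset.mpr hp)
  set C : ℕ := maxP + maxQ + 1 with hC
  -- the ball of radius C
  set Ball : Set N := {n | ∃ l : List N, (∀ t ∈ l, t ∈ T) ∧ l.length ≤ C ∧ l.prod = n}
    with hBalldef
  have hBallfin : Ball.Finite := by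
    have : Finite ↥T := hT
    have h1 : {l : List ↥T | l.length ≤ C}.Finite := List.finite_length_le ↥T C
    apply (h1.image (fun l => (l.map Subtype.val).prod)).subset
    rintro n ⟨l, hl1, hl2, rfl⟩
    refine ⟨l.pmap (fun a h => (⟨a, h⟩ : ↥T)) hl1, by simpa using hl2, ?_⟩
    congr 1
    simp [List.map_pmap]
  set S : Set M := {s : M | (s : N) ∈ Ball} with hSdef
  have hSfin : S.Finite := hBallfin.preimage (Subtype.val_injective.injOn)
  -- the key lemma
  have key : ∀ (l : List N), (∀ t ∈ l, t ∈ T) → ∀ (m : M) (p q : N), p * q = 1 →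
      len p ≤ maxP → len q ≤ maxQ → ∀ y : M, (m : N) * p * l.prod = (y : N) →
      ∃ w : List M, (∀ s ∈ w, s ∈ S) ∧ m * w.prod = y ∧ w.length ≤ l.length + 1 := by
    intro l
    induction l with
    | nil =>
      intro _ m p q hpq hp hq y hy
      simp only [List.prod_nil, mul_one] at hy
      have hpM : p ∈ M := hunit (m : N) p m.2 (hy ▸ y.2)
      have hpBall : (⟨p, hpM⟩ : M) ∈ S := by
        refine ⟨wl p, hwl1 p, ?_, hwl3 p⟩
        rw [hwl2 p]; omega
      refine ⟨[⟨p, hpM⟩], by simpa using hpBall, ?_, by simp⟩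
      apply Subtype.ext
      simpa using hy
    | cons t l' IH =>
      intro hl m p q hpq hp hq y hy
      have ht : t ∈ T := hl t (by simp)
      obtain ⟨m1, hm1, p1, hp1, hmp1⟩ := hMP ((m : N) * p * t)
      set q1 : N := qf p1 with hq1def
      have hq1 : p1 * q1 = 1 := hqf p1 hp1
      set s0 : N := p * t * q1 with hs0def
      have hms0 : (m : N) * s0 = m1 := by
        calc (m : N) * s0 = ((m : N) * p * t) * q1 := by
              simp [hs0def, mul_assoc]
          _ = m1 * (p1 * q1) := by rw [← mul_assoc, hmp1]
          _ = m1 := by rw [hq1, mul_one]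
      have hs0M : s0 ∈ M := hunit (m : N) s0 m.2 (by rw [hms0]; exact hm1)
      have hs0S : (⟨s0, hs0M⟩ : M) ∈ S := by
        refine ⟨wl p ++ t :: wl q1, ?_, ?_, ?_⟩
        · intro a ha
          rcases List.mem_append.mp ha with h | h
          · exact hwl1 p a h
          · rcases List.mem_cons.mp h with h | h
            · exact h ▸ ht
            · exact hwl1 q1 a h
        · simp only [List.length_append, List.length_cons, hwl2]
          have := hleQmax p1 hp1
          rw [← hq1def] at this
          omega
        · simp [List.prod_append, List.prod_cons, hwl3, hs0def, mul_assoc]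
      have hstep : ((⟨m1, hm1⟩ : M) : N) * p1 * l'.prod = (y : N) := by
        have : ((m : N) * p * t) * l'.prod = (y : N) := by
          rw [← hy, List.prod_cons, mul_assoc]
        rw [← this, ← hmp1]
      obtain ⟨w', hw'1, hw'2, hw'3⟩ := IH (fun a ha => hl a (by simp [ha]))
        ⟨m1, hm1⟩ p1 q1 hq1 (hlePmax p1 hp1) (hq1def ▸ hleQmax p1 hp1) y hstep
      refine ⟨⟨s0, hs0M⟩ :: w', ?_, ?_, by simpa using Nat.succ_le_succ hw'3⟩
      · intro s hs
        rcases List.mem_cons.mp hs with h | h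
        · exact h ▸ hs0S
        · exact hw'1 s h
      · rw [List.prod_cons, ← mul_assoc]
        have : m * (⟨s0, hs0M⟩ : M) = ⟨m1, hm1⟩ := Subtype.ext (by simpa using hms0)
        rw [this, hw'2]
  have hlen1P : len (1 : N) ≤ maxP := by omega
  have hlen1Q : len (1 : N) ≤ maxQ := by omega
  -- distance comparison (main direction)
  have hSle : ∀ (x y : M) (l : List N), (∀ t ∈ l, t ∈ T) → (x : N) * l.prod = (y : N) →
      ∃ w : List M, (∀ s ∈ w, s ∈ S) ∧ x * w.prod = y ∧ w.length ≤ l.length + 1 := by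
    intro x y l hl hxy
    exact key l hl x 1 1 (one_mul 1) hlen1P hlen1Q y (by simpa using hxy)
  -- S generates M
  have hgen : Submonoid.closure S = ⊤ := by
    rw [eq_top_iff]
    intro x _
    obtain ⟨l, hl1, hl2⟩ := hlist (x : N)
    obtain ⟨w, hw1, hw2, _⟩ := hSle 1 x l hl1 (by simpa using hl2)
    rw [one_mul] at hw2
    exact hw2 ▸ list_prod_mem (fun s hs => Submonoid.subset_closure (hw1 s hs))
  -- expansion of S-words into T-words
  have expand : ∀ w : List M, (∀ s ∈ w, s ∈ S) →
      ∃ L : List N, (∀ t ∈ L, t ∈ T) ∧ L.prod = ((w.prod : M) : N) ∧ L.length ≤ C * w.length := by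
    intro w
    induction w with
    | nil => exact fun _ => ⟨[], by simp, by simp, by simp⟩
    | cons s w' IH =>
      intro hw
      obtain ⟨L', hL'1, hL'2, hL'3⟩ := IH (fun a ha => hw a (by simp [ha]))
      obtain ⟨l1, hl11, hl12, hl13⟩ := hw s (by simp)
      refine ⟨l1 ++ L', ?_, ?_, ?_⟩
      · intro a ha
        rcases List.mem_append.mp ha with h | h
        · exact hl11 a h
        · exact hL'1 a h
      · rw [List.prod_append, hl13, hL'2, List.prod_cons, Submonoid.coe_mul]
      · simp only [List.length_append, List.length_cons]
        calc l1.length + L'.length ≤ C + C * w'.length := by omega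
          _ = C * (w'.length + 1) := by ring
  refine ⟨S, hSfin, hgen, fun x => (x : N), (C : ℝ≥0), (C : ℝ≥0), (C : ℝ≥0),
    ?_, ?_, ?_, ?_, ?_⟩
  · exact_mod_cast Nat.one_le_iff_ne_zero.mpr (by omega)
  · exact_mod_cast Nat.pos_of_ne_zero (by omega)
  · exact_mod_cast Nat.one_le_iff_ne_zero.mpr (by omega)
  · intro x y
    have hCcast : ((C : ℝ≥0) : ℝ≥0∞) = (C : ℝ≥0∞) := by push_cast; rfl
    constructor
    · -- lower bound
      by_cases hfin : wordDist T (x : N) (y : N) = ⊤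
      · rw [hfin]; exact le_top
      · obtain ⟨l, hl1, hl2, hl3⟩ := wordDist_attained T hfin
        obtain ⟨w, hw1, hw2, hw3⟩ := hSle x y l hl1 hl2
        have h1 : wordDist S x y ≤ (l.length : ℝ≥0∞) + 1 := by
          calc wordDist S x y ≤ (w.length : ℝ≥0∞) := wordDist_le S w hw1 hw2
            _ ≤ (l.length : ℝ≥0∞) + 1 := by exact_mod_cast hw3
        have h2 : wordDist S x y ≤ wordDist T (x : N) (y : N) + (C : ℝ≥0∞) := by
          rw [hl3]
          refine h1.trans (add_le_add_right ?_ _)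
          exact_mod_cast Nat.one_le_iff_ne_zero.mpr (by omega)
        calc wordDist S x y / ((C : ℝ≥0) : ℝ≥0∞) - ((C : ℝ≥0) : ℝ≥0∞)
            ≤ wordDist S x y - ((C : ℝ≥0) : ℝ≥0∞) := by
              apply tsub_le_tsub_right
              rw [div_eq_mul_inv]
              exact mul_le_of_le_one_right' (ENNReal.inv_le_one.mpr
                (by exact_mod_cast Nat.one_le_iff_ne_zero.mpr (by omega : C ≠ 0)))
          _ ≤ wordDist T (x : N) (y : N) := by
              rw [tsub_le_iff_right, hCcast]
              exact h2
    · -- upper bound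
      by_cases hfin : wordDist S x y = ⊤
      · rw [hfin, hCcast, ENNReal.mul_top (by exact_mod_cast (by omega : C ≠ 0))]
        exact le_top
      · obtain ⟨w, hw1, hw2, hw3⟩ := wordDist_attained S hfin
        obtain ⟨L, hL1, hL2, hL3⟩ := expand w hw1
        have hxy : (x : N) * L.prod = (y : N) := by
          have h' : ((x * w.prod : M) : N) = (y : N) := congrArg _ hw2
          rw [hL2]
          simp only [Submonoid.coe_mul] at h'
          exact h'
        calc wordDist T (x : N) (y : N) ≤ (L.length : ℝ≥0∞) := wordDist_le T L hL1 hxy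
          _ ≤ ((C * w.length : ℕ) : ℝ≥0∞) := by exact_mod_cast hL3
          _ = (C : ℝ≥0∞) * (w.length : ℝ≥0∞) := by push_cast; ring
          _ ≤ ((C : ℝ≥0) : ℝ≥0∞) * wordDist S x y + ((C : ℝ≥0) : ℝ≥0∞) := by
              rw [hw3, hCcast]
              exact le_self_add
  · -- quasi-density
    intro n
    obtain ⟨m, hm, p, hp, hmp⟩ := hMP n
    refine ⟨⟨m, hm⟩, ?_, ?_⟩
    · have h1 : wordDist T m n ≤ ((wl p).length : ℝ≥0∞) :=
        wordDist_le T (wl p) (hwl1 p) (by rw [hwl3 p, hmp])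
      rw [hwl2 p] at h1
      refine h1.trans ?_
      have : len p ≤ C := by have := hlePmax p hp; omega
      exact_mod_cast this
    · have h1 : wordDist T n m ≤ ((wl (qf p)).length : ℝ≥0∞) :=
        wordDist_le T (wl (qf p)) (hwl1 (qf p))
          (by rw [hwl3 (qf p), ← hmp, mul_assoc, hqf p hp, mul_one])
      rw [hwl2 (qf p)] at h1
      refine h1.trans ?_
      have : len (qf p) ≤ C := by have := hleQmax p hp; omega
      exact_mod_cast this
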